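/- Let H be a real Hilbert space, f : H → ℝ strongly quasiconvex with value γ > 0 with minimizer x*, let c > 0 and (c_k) a sequence of reals with c_k ≥ c for all k, and let (x^k) be a sequence in H with x^{k+1} ∈ Prox_{c_k f}(x^k) for all k ∈ ℕ. Then x^k converges strongly to x*, i.e., ‖x^k − x*‖ → 0 as k → ∞. -/

import Mathlib

open Filter

private lemma aux_le_zero_of_forall {L M : ℝ} (hM : 0 ≤ M)
    (h : ∀ t : ℝ, 0 < t → t ≤ 1 → L ≤ t * M) : L ≤ 0 := by
  by_contra hcon
  push_neg at hcon
  have hMpos : (0:ℝ) < 2 * (M + 1) := by linarith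
  have ht0 : 0 < min 1 (L / (2 * (M + 1))) := lt_min one_pos (div_pos hcon hMpos)
  have hkey := h _ ht0 (min_le_left _ _)
  have h5 : min 1 (L / (2 * (M + 1))) * M ≤ L / (2 * (M + 1)) * M :=
    mul_le_mul_of_nonneg_right (min_le_right _ _) hM
  have h6 : L / (2 * (M + 1)) * M ≤ L / 2 := by
    rw [div_mul_eq_mul_div, div_le_div_iff₀ hMpos two_pos]; nlinarith
  linarith

/-- The proximal point algorithm for a strongly quasiconvex
function converges strongly to the minimizer. -/
theorem ppa_strong_convergence
    {H : Type*} [NormedAddCommGroup H] [InnerProductSpace ℝ H] [CompleteSpace H]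
    (f : H → ℝ) (γ : ℝ) (hγ : 0 < γ)
    (hf : ∀ x y : H, ∀ t ∈ Set.Icc (0 : ℝ) 1,
      f ((1 - t) • x + t • y) ≤ max (f x) (f y) - t * (1 - t) * (γ / 2) * ‖x - y‖ ^ 2)
    (xs : H) (hxs : ∀ y : H, f xs ≤ f y)
    (c : ℝ) (hc : 0 < c) (ck : ℕ → ℝ) (hck : ∀ k, c ≤ ck k)
    (x : ℕ → H)
    (hx : ∀ k : ℕ, ∀ y : H,
      f (x (k + 1)) + (1 / (2 * ck k)) * ‖x (k + 1) - x k‖ ^ 2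
        ≤ f y + (1 / (2 * ck k)) * ‖y - x k‖ ^ 2) :
    Filter.Tendsto (fun k => ‖x k - xs‖) Filter.atTop (nhds 0) := by
  have h1 : (0:ℝ) < 1 + γ * c := by nlinarith
  set q : ℝ := 1 / (1 + γ * c) with hq
  have hq0 : 0 ≤ q := by positivity
  have hq1 : q < 1 := by
    rw [hq, div_lt_one h1]; nlinarith
  have step : ∀ k, ‖x (k+1) - xs‖ ^ 2 ≤ q * ‖x k - xs‖ ^ 2 := by
    intro k
    set u := x (k+1) with hu
    set v := x k with hv
    set w := xs with hw
    set d := ck k with hdd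
    have hd : (0:ℝ) < d := lt_of_lt_of_le hc (hck k)
    set A := ‖u - w‖ ^ 2 with hA
    set B : ℝ := inner ℝ (u - v) (w - u) with hB
    have hA0 : 0 ≤ A := by positivity
    -- key inequality for all t ∈ (0,1]
    have key : ∀ t : ℝ, 0 < t → t ≤ 1 →
        γ * d * A - 2 * B ≤ t * (γ * d * A + A) := by
      intro t ht0 ht1
      have hmem : t ∈ Set.Icc (0:ℝ) 1 := ⟨le_of_lt ht0, ht1⟩
      have hprox := hx k ((1 - t) • u + t • w)
      rw [← hu, ← hv, ← hdd] at hprox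
      have hquasi := hf u w t hmem
      rw [← hA] at hquasi
      have hmax : max (f u) (f w) = f u := max_eq_left (hxs u)
      rw [hmax] at hquasi
      -- expand the norm
      have hsplit : ((1 - t) • u + t • w) - v = (u - v) + t • (w - u) := by
        module
      have expand : ‖((1 - t) • u + t • w) - v‖ ^ 2
          = ‖u - v‖ ^ 2 + 2 * t * B + t ^ 2 * A := by
        rw [hsplit, norm_add_sq_real, real_inner_smul_right, norm_smul,
          Real.norm_eq_abs, abs_of_pos ht0, mul_pow, norm_sub_rev w u, ← hA, ← hB]
        ring
      rw [expand] at hprox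
      have h2d : (0:ℝ) < 2 * d := by linarith
      have hdist : (1/(2*d)) * (‖u - v‖ ^ 2 + 2 * t * B + t ^ 2 * A)
          = (1/(2*d)) * ‖u - v‖ ^ 2 + (2 * t * B + t ^ 2 * A) / (2*d) := by
        ring
      rw [hdist] at hprox
      have base2 : t * (1 - t) * (γ / 2) * A ≤ (2 * t * B + t ^ 2 * A) / (2 * d) := by
        linarith
      have base3 := (le_div_iff₀ h2d).mp base2
      have base4 : t * ((1 - t) * γ * d * A) ≤ t * (2 * B + t * A) := by
        linarith [base3]
      have base5 : (1 - t) * γ * d * A ≤ 2 * B + t * A :=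
        le_of_mul_le_mul_left base4 ht0
      linarith [base5, mul_nonneg (mul_nonneg hγ.le hd.le) hA0]
    -- let t → 0 : γ d A ≤ 2 B
    have hM : 0 ≤ γ * d * A + A := by positivity
    have hL : γ * d * A - 2 * B ≤ 0 :=
      aux_le_zero_of_forall hM key
    have h2B : 2 * B = ‖v - w‖ ^ 2 - A - ‖u - v‖ ^ 2 := by
      have hvw : v - w = (v - u) + (u - w) := by abel
      have hBalt : (inner ℝ (v - u) (u - w) : ℝ) = B := by
        rw [show v - u = -(u - v) by abel, show u - w = -(w - u) by abel,
          inner_neg_neg]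
      rw [hvw, norm_add_sq_real, hBalt, norm_sub_rev v u]
      ring
    -- conclude
    have hmono : γ * c * A ≤ γ * d * A :=
      mul_le_mul_of_nonneg_right
        (mul_le_mul_of_nonneg_left (hck k) (le_of_lt hγ)) hA0
    have hnn : 0 ≤ ‖u - v‖ ^ 2 := by positivity
    have hfin : (1 + γ * c) * A ≤ ‖v - w‖ ^ 2 := by nlinarith
    rw [hq]
    rw [div_mul_eq_mul_div, le_div_iff₀ h1]
    nlinarith [hfin]
  -- geometric decay
  have bound : ∀ k, ‖x k - xs‖ ^ 2 ≤ ‖x 0 - xs‖ ^ 2 * q ^ k := by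
    intro k
    induction k with
    | zero => simp
    | succ n ih =>
      calc ‖x (n+1) - xs‖ ^ 2 ≤ q * ‖x n - xs‖ ^ 2 := step n
        _ ≤ q * (‖x 0 - xs‖ ^ 2 * q ^ n) := by
            exact mul_le_mul_of_nonneg_left ih hq0
        _ = ‖x 0 - xs‖ ^ 2 * q ^ (n+1) := by ring
  have hsq : Tendsto (fun k => ‖x k - xs‖ ^ 2) atTop (nhds 0) := by
    have hg : Tendsto (fun k => ‖x 0 - xs‖ ^ 2 * q ^ k) atTop (nhds 0) := by
      have := tendsto_pow_atTop_nhds_zero_of_lt_one hq0 hq1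
      simpa using this.const_mul (‖x 0 - xs‖ ^ 2)
    exact squeeze_zero (fun k => by positivity) bound hg
  have hfin := (Real.continuous_sqrt.tendsto 0).comp hsq
  rw [Real.sqrt_zero] at hfin
  exact hfin.congr fun k => Real.sqrt_sq (norm_nonneg _)
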